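/- For every ENF type e, every term N of type e with a free variable x of sum type c+d (with c ∈ CNF, d ∈ DNF), every term M of type c+d, and fresh variables x₁, x₂ ∉ FV(N), the unrestricted sum eta equation N{M/x} = δ(M, x₁.N{ι₁x₁/x}, x₂.N{ι₂x₂/x}) is derivable in the restricted theory =βη^e. The proof is by induction on the structure of e: the case e = d is the axiom (η+^e); the case e = (c'→b)×c₀ uses (η×^e), the induction hypothesis, and (η_π^e); the case e = c'→b uses (η→^e), (η+^e), (η_λ^e), and (η→^e) again. -/

import Mathlib

namespace ExpLog

-- Types generated by atoms, arrows, products and sums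
-- (together with the unit type, the empty product).
inductive Ty : Type
  | atom : ℕ → Ty
  | unit : Ty
  | arr  : Ty → Ty → Ty
  | prod : Ty → Ty → Ty
  | sum  : Ty → Ty → Ty
  deriving Repr, DecidableEq
abbrev Ctx := List Ty

-- Typed de Bruijn indices.
inductive Var : Ctx → Ty → Type
  | vz {Γ A} : Var (A :: Γ) A
  | vs {Γ A B} : Var Γ A → Var (B :: Γ) A

-- Intrinsically typed terms of the lambda calculus with sums, products (and unit).
inductive Tm : Ctx → Ty → Type
  | var  {Γ A} : Var Γ A → Tm Γ A
  | lam  {Γ A B} : Tm (A :: Γ) B → Tm Γ (Ty.arr A B)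
  | app  {Γ A B} : Tm Γ (Ty.arr A B) → Tm Γ A → Tm Γ B
  | pair {Γ A B} : Tm Γ A → Tm Γ B → Tm Γ (Ty.prod A B)
  | fst  {Γ A B} : Tm Γ (Ty.prod A B) → Tm Γ A
  | snd  {Γ A B} : Tm Γ (Ty.prod A B) → Tm Γ B
  | inl  {Γ A B} : Tm Γ A → Tm Γ (Ty.sum A B)
  | inr  {Γ A B} : Tm Γ B → Tm Γ (Ty.sum A B)
  | case {Γ A B C} : Tm Γ (Ty.sum A B) → Tm (A :: Γ) C → Tm (B :: Γ) C → Tm Γ C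
  | star {Γ} : Tm Γ Ty.unit

-- Renamings and substitutions.
def Ren (Γ Δ : Ctx) : Type := ∀ A, Var Γ A → Var Δ A

def Ren.lift {Γ Δ A} (ρ : Ren Γ Δ) : Ren (A :: Γ) (A :: Δ) := fun B x =>
  match x with
  | .vz => .vz
  | .vs y => .vs (ρ B y)

def Tm.rename : ∀ {Γ Δ : Ctx} {A}, Ren Γ Δ → Tm Γ A → Tm Δ A
  | _, _, _, ρ, .var x => .var (ρ _ x)
  | _, _, _, ρ, .lam t => .lam (Tm.rename (Ren.lift ρ) t)
  | _, _, _, ρ, .app t u => .app (Tm.rename ρ t) (Tm.rename ρ u)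
  | _, _, _, ρ, .pair t u => .pair (Tm.rename ρ t) (Tm.rename ρ u)
  | _, _, _, ρ, .fst t => .fst (Tm.rename ρ t)
  | _, _, _, ρ, .snd t => .snd (Tm.rename ρ t)
  | _, _, _, ρ, .inl t => .inl (Tm.rename ρ t)
  | _, _, _, ρ, .inr t => .inr (Tm.rename ρ t)
  | _, _, _, ρ, .case s t u =>
      .case (Tm.rename ρ s) (Tm.rename (Ren.lift ρ) t) (Tm.rename (Ren.lift ρ) u)
  | _, _, _, _, .star => .star

/-- Weakening of a term by one extra hypothesis. -/
def Tm.wk {Γ A B} (t : Tm Γ A) : Tm (B :: Γ) A := Tm.rename (fun _ v => .vs v) t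

def Sub (Γ Δ : Ctx) : Type := ∀ A, Var Γ A → Tm Δ A

def Sub.lift {Γ Δ A} (σ : Sub Γ Δ) : Sub (A :: Γ) (A :: Δ) := fun B x =>
  match x with
  | .vz => .var .vz
  | .vs y => Tm.wk (σ B y)

def Tm.subst : ∀ {Γ Δ : Ctx} {A}, Sub Γ Δ → Tm Γ A → Tm Δ A
  | _, _, _, σ, .var x => σ _ x
  | _, _, _, σ, .lam t => .lam (Tm.subst (Sub.lift σ) t)
  | _, _, _, σ, .app t u => .app (Tm.subst σ t) (Tm.subst σ u)
  | _, _, _, σ, .pair t u => .pair (Tm.subst σ t) (Tm.subst σ u)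
  | _, _, _, σ, .fst t => .fst (Tm.subst σ t)
  | _, _, _, σ, .snd t => .snd (Tm.subst σ t)
  | _, _, _, σ, .inl t => .inl (Tm.subst σ t)
  | _, _, _, σ, .inr t => .inr (Tm.subst σ t)
  | _, _, _, σ, .case s t u =>
      .case (Tm.subst σ s) (Tm.subst (Sub.lift σ) t) (Tm.subst (Sub.lift σ) u)
  | _, _, _, _, .star => .star

/-- Substitution of a single term for de Bruijn index 0. -/
def Sub.single {Γ A} (u : Tm Γ A) : Sub (A :: Γ) Γ := fun B x =>
  match x with
  | .vz => u
  | .vs y => .var y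

/-- `t.subst1 u` is `t{u/x}` where `x` is de Bruijn index 0. -/
def Tm.subst1 {Γ A B} (t : Tm (A :: Γ) B) (u : Tm Γ A) : Tm Γ B := Tm.subst (Sub.single u) t

/-- The substitution `{ι₁ x₁ / x}` (for the top variable of sum type). -/
def Sub.inlTop {Γ A B} : Sub (Ty.sum A B :: Γ) (A :: Γ) := fun C x =>
  match x with
  | .vz => .inl (.var .vz)
  | .vs y => .var (.vs y)

/-- The substitution `{ι₂ x₂ / x}` (for the top variable of sum type). -/
def Sub.inrTop {Γ A B} : Sub (Ty.sum A B :: Γ) (B :: Γ) := fun C x =>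
  match x with
  | .vz => .inr (.var .vz)
  | .vs y => .var (.vs y)

/-- Exchange of the two topmost hypotheses. -/
def Ren.swap {Γ A B} : Ren (A :: B :: Γ) (B :: A :: Γ) := fun C x =>
  match x with
  | .vz => .vs .vz
  | .vs .vz => .vz
  | .vs (.vs y) => .vs (.vs y)

-- The standard equational theory =βη of the lambda calculus with sums
-- (with the eta law for the unit type, the nullary product).
inductive Jeq : ∀ {Γ : Ctx} {A : Ty}, Tm Γ A → Tm Γ A → Prop
  | refl {Γ A} (t : Tm Γ A) : Jeq t t
  | symm {Γ A} {t u : Tm Γ A} : Jeq t u → Jeq u t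
  | trans {Γ A} {t u v : Tm Γ A} : Jeq t u → Jeq u v → Jeq t v
  | lam_congr {Γ A B} {t t' : Tm (A :: Γ) B} : Jeq t t' → Jeq (Tm.lam t) (Tm.lam t')
  | app_congr {Γ A B} {t t' : Tm Γ (Ty.arr A B)} {u u' : Tm Γ A} :
      Jeq t t' → Jeq u u' → Jeq (Tm.app t u) (Tm.app t' u')
  | pair_congr {Γ A B} {t t' : Tm Γ A} {u u' : Tm Γ B} :
      Jeq t t' → Jeq u u' → Jeq (Tm.pair t u) (Tm.pair t' u')
  | fst_congr {Γ A B} {t t' : Tm Γ (Ty.prod A B)} : Jeq t t' → Jeq (Tm.fst t) (Tm.fst t')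
  | snd_congr {Γ A B} {t t' : Tm Γ (Ty.prod A B)} : Jeq t t' → Jeq (Tm.snd t) (Tm.snd t')
  | inl_congr {Γ A B} {t t' : Tm Γ A} : Jeq t t' → Jeq (Tm.inl (B := B) t) (Tm.inl t')
  | inr_congr {Γ A B} {t t' : Tm Γ B} : Jeq t t' → Jeq (Tm.inr (A := A) t) (Tm.inr t')
  | case_congr {Γ A B C} {s s' : Tm Γ (Ty.sum A B)} {t t' : Tm (A :: Γ) C} {u u' : Tm (B :: Γ) C} :
      Jeq s s' → Jeq t t' → Jeq u u' → Jeq (Tm.case s t u) (Tm.case s' t' u')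
  | beta_arr {Γ A B} (t : Tm (A :: Γ) B) (u : Tm Γ A) :
      Jeq (Tm.app (Tm.lam t) u) (Tm.subst1 t u)
  | beta_fst {Γ A B} (t : Tm Γ A) (u : Tm Γ B) : Jeq (Tm.fst (Tm.pair t u)) t
  | beta_snd {Γ A B} (t : Tm Γ A) (u : Tm Γ B) : Jeq (Tm.snd (Tm.pair t u)) u
  | beta_inl {Γ A B C} (m : Tm Γ A) (n₁ : Tm (A :: Γ) C) (n₂ : Tm (B :: Γ) C) :
      Jeq (Tm.case (Tm.inl m) n₁ n₂) (Tm.subst1 n₁ m)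
  | beta_inr {Γ A B C} (m : Tm Γ B) (n₁ : Tm (A :: Γ) C) (n₂ : Tm (B :: Γ) C) :
      Jeq (Tm.case (Tm.inr m) n₁ n₂) (Tm.subst1 n₂ m)
  | eta_arr {Γ A B} (t : Tm Γ (Ty.arr A B)) :
      Jeq t (Tm.lam (Tm.app (Tm.wk t) (Tm.var .vz)))
  | eta_prod {Γ A B} (t : Tm Γ (Ty.prod A B)) : Jeq t (Tm.pair (Tm.fst t) (Tm.snd t))
  | eta_sum {Γ A B C} (n : Tm (Ty.sum A B :: Γ) C) (m : Tm Γ (Ty.sum A B)) :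
      Jeq (Tm.subst1 n m)
          (Tm.case m (Tm.subst Sub.inlTop n) (Tm.subst Sub.inrTop n))
  | eta_unit {Γ} (t : Tm Γ Ty.unit) : Jeq t Tm.star

/-- Type isomorphism: a pair of closed coercions whose compositions are βη-equal
to the identity. -/
def Iso (τ σ : Ty) : Prop :=
  ∃ (M : Tm [] (Ty.arr σ τ)) (N : Tm [] (Ty.arr τ σ)),
    Jeq (Tm.lam (Tm.app (Tm.wk M) (Tm.app (Tm.wk N) (Tm.var .vz))))
        (Tm.lam (Tm.var .vz)) ∧
    Jeq (Tm.lam (Tm.app (Tm.wk N) (Tm.app (Tm.wk M) (Tm.var .vz))))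
        (Tm.lam (Tm.var .vz))
-- The ENF grammar as predicates on types:
-- Base b ::= p | d;  DNF d ::= c₁+(⋯+cₙ) (n≥2);
-- CNF c ::= (c₁→b₁)×(⋯×(cₙ→bₙ)) (n≥0, the empty product being the unit type).
mutual
inductive IsBase : Ty → Prop
  | prp (p : ℕ) : IsBase (.atom p)
  | bd {t : Ty} : IsDNF t → IsBase t

inductive IsDNF : Ty → Prop
  | two {c1 c2 : Ty} : IsCNF c1 → IsCNF c2 → IsDNF (.sum c1 c2)
  | dis {c d : Ty} : IsCNF c → IsDNF d → IsDNF (.sum c d)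

inductive IsCNF : Ty → Prop
  | top : IsCNF .unit
  | con {c b t : Ty} : IsCNF c → IsBase b → IsCNF t → IsCNF (.prod (.arr c b) t)
end

/-- ENF ∋ e ::= c | d. -/
def IsENF (t : Ty) : Prop := IsCNF t ∨ IsDNF t
-- The restricted equational theory =βη^e on lambda terms of ENF type
-- (Figure 3 of the paper): the βη-axioms specialized to ENF types,
-- together with the permutation axioms (η_π^e) and (η_λ^e).
inductive EqE : ∀ {Γ : Ctx} {A : Ty}, Tm Γ A → Tm Γ A → Prop
  | refl {Γ A} (t : Tm Γ A) : EqE t t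
  | symm {Γ A} {t u : Tm Γ A} : EqE t u → EqE u t
  | trans {Γ A} {t u v : Tm Γ A} : EqE t u → EqE u v → EqE t v
  | lam_congr {Γ A B} {t t' : Tm (A :: Γ) B} : EqE t t' → EqE (Tm.lam t) (Tm.lam t')
  | app_congr {Γ A B} {t t' : Tm Γ (Ty.arr A B)} {u u' : Tm Γ A} :
      EqE t t' → EqE u u' → EqE (Tm.app t u) (Tm.app t' u')
  | pair_congr {Γ A B} {t t' : Tm Γ A} {u u' : Tm Γ B} :
      EqE t t' → EqE u u' → EqE (Tm.pair t u) (Tm.pair t' u')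
  | fst_congr {Γ A B} {t t' : Tm Γ (Ty.prod A B)} : EqE t t' → EqE (Tm.fst t) (Tm.fst t')
  | snd_congr {Γ A B} {t t' : Tm Γ (Ty.prod A B)} : EqE t t' → EqE (Tm.snd t) (Tm.snd t')
  | inl_congr {Γ A B} {t t' : Tm Γ A} : EqE t t' → EqE (Tm.inl (B := B) t) (Tm.inl t')
  | inr_congr {Γ A B} {t t' : Tm Γ B} : EqE t t' → EqE (Tm.inr (A := A) t) (Tm.inr t')
  | case_congr {Γ A B C} {s s' : Tm Γ (Ty.sum A B)} {t t' : Tm (A :: Γ) C} {u u' : Tm (B :: Γ) C} :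
      EqE s s' → EqE t t' → EqE u u' → EqE (Tm.case s t u) (Tm.case s' t' u')
  -- (β→^e): the abstracted variable has CNF type c, the body has base type b
  | beta_arr {Γ c b} (hc : IsCNF c) (hb : IsBase b) (t : Tm (c :: Γ) b) (u : Tm Γ c) :
      EqE (Tm.app (Tm.lam t) u) (Tm.subst1 t u)
  -- (β×^e): pairs are of type (c→b)×c₀
  | beta_fst {Γ c b c₀} (hc : IsCNF c) (hb : IsBase b) (hc₀ : IsCNF c₀)
      (t : Tm Γ (Ty.arr c b)) (u : Tm Γ c₀) : EqE (Tm.fst (Tm.pair t u)) t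
  | beta_snd {Γ c b c₀} (hc : IsCNF c) (hb : IsBase b) (hc₀ : IsCNF c₀)
      (t : Tm Γ (Ty.arr c b)) (u : Tm Γ c₀) : EqE (Tm.snd (Tm.pair t u)) u
  -- (β+^e): the scrutinee has type c+d, the result has ENF type e
  | beta_inl {Γ c d e} (hc : IsCNF c) (hd : IsDNF d) (he : IsENF e)
      (m : Tm Γ c) (n₁ : Tm (c :: Γ) e) (n₂ : Tm (d :: Γ) e) :
      EqE (Tm.case (Tm.inl m) n₁ n₂) (Tm.subst1 n₁ m)
  | beta_inr {Γ c d e} (hc : IsCNF c) (hd : IsDNF d) (he : IsENF e)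
      (m : Tm Γ d) (n₁ : Tm (c :: Γ) e) (n₂ : Tm (d :: Γ) e) :
      EqE (Tm.case (Tm.inr m) n₁ n₂) (Tm.subst1 n₂ m)
  -- (η→^e): at type c→b only
  | eta_arr {Γ c b} (hc : IsCNF c) (hb : IsBase b) (t : Tm Γ (Ty.arr c b)) :
      EqE t (Tm.lam (Tm.app (Tm.wk t) (Tm.var .vz)))
  -- (η×^e): at type (c→b)×c₀ only
  | eta_prod {Γ c b c₀} (hc : IsCNF c) (hb : IsBase b) (hc₀ : IsCNF c₀)
      (t : Tm Γ (Ty.prod (Ty.arr c b) c₀)) : EqE t (Tm.pair (Tm.fst t) (Tm.snd t))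
  -- (η+^e): the term substituted into has base type b, the scrutinee has DNF (sum) type d
  | eta_sum {Γ c d b} (hd : IsDNF (Ty.sum c d)) (hb : IsBase b)
      (n : Tm (Ty.sum c d :: Γ) b) (m : Tm Γ (Ty.sum c d)) :
      EqE (Tm.subst1 n m)
          (Tm.case m (Tm.subst Sub.inlTop n) (Tm.subst Sub.inrTop n))
  -- (η_π^e): πᵢ δ(M, x₁.N₁, x₂.N₂) = δ(M, x₁.πᵢN₁, x₂.πᵢN₂)
  | eta_pi_fst {Γ A B C D} (m : Tm Γ (Ty.sum A B))
      (n₁ : Tm (A :: Γ) (Ty.prod C D)) (n₂ : Tm (B :: Γ) (Ty.prod C D)) :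
      EqE (Tm.fst (Tm.case m n₁ n₂)) (Tm.case m (Tm.fst n₁) (Tm.fst n₂))
  | eta_pi_snd {Γ A B C D} (m : Tm Γ (Ty.sum A B))
      (n₁ : Tm (A :: Γ) (Ty.prod C D)) (n₂ : Tm (B :: Γ) (Ty.prod C D)) :
      EqE (Tm.snd (Tm.case m n₁ n₂)) (Tm.case m (Tm.snd n₁) (Tm.snd n₂))
  -- (η_λ^e): λy. δ(M, x₁.N₁, x₂.N₂) = δ(M, x₁.λy.N₁, x₂.λy.N₂)  (y ∉ FV(M),
  -- expressed via weakening of M and exchange of the two topmost variables)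
  | eta_lam {Γ A B Y C} (m : Tm Γ (Ty.sum A B))
      (n₁ : Tm (Y :: A :: Γ) C) (n₂ : Tm (Y :: B :: Γ) C) :
      EqE (Tm.lam (Tm.case (Tm.wk m) (Tm.rename Ren.swap n₁) (Tm.rename Ren.swap n₂)))
          (Tm.case m (Tm.lam n₁) (Tm.lam n₂))

-- ===== Auxiliary substitution lemmas =====

theorem Ren.lift_comp {Γ Δ Θ : Ctx} {A : Ty} (ρ : Ren Γ Δ) (ρ' : Ren Δ Θ) :
    (Ren.lift (A := A) fun B x => ρ' B (ρ B x)) = fun B x => Ren.lift ρ' B (Ren.lift ρ B x) := by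
  funext B x; cases x <;> rfl

theorem rename_rename : ∀ {Γ : Ctx} {A : Ty} (t : Tm Γ A) {Δ Θ : Ctx} (ρ : Ren Γ Δ)
    (ρ' : Ren Δ Θ), Tm.rename ρ' (Tm.rename ρ t) = Tm.rename (fun B x => ρ' B (ρ B x)) t := by
  intro Γ A t
  induction t with
  | var x => intros; rfl
  | lam t ih => intro Δ Θ ρ ρ'; simp only [Tm.rename]; rw [ih, ← Ren.lift_comp]
  | app t u iht ihu => intro Δ Θ ρ ρ'; simp only [Tm.rename]; rw [iht, ihu]
  | pair t u iht ihu => intro Δ Θ ρ ρ'; simp only [Tm.rename]; rw [iht, ihu]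
  | fst t ih => intro Δ Θ ρ ρ'; simp only [Tm.rename]; rw [ih]
  | snd t ih => intro Δ Θ ρ ρ'; simp only [Tm.rename]; rw [ih]
  | inl t ih => intro Δ Θ ρ ρ'; simp only [Tm.rename]; rw [ih]
  | inr t ih => intro Δ Θ ρ ρ'; simp only [Tm.rename]; rw [ih]
  | case s t u ihs iht ihu =>
      intro Δ Θ ρ ρ'; simp only [Tm.rename]
      rw [ihs, iht, ihu, ← Ren.lift_comp, ← Ren.lift_comp]
  | star => intros; rfl

theorem Sub.lift_ren {Γ Δ Θ : Ctx} {A : Ty} (ρ : Ren Γ Δ) (σ : Sub Δ Θ) :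
    (Sub.lift (A := A) fun B x => σ B (ρ B x)) = fun B x => Sub.lift σ B (Ren.lift ρ B x) := by
  funext B x; cases x <;> rfl

theorem subst_rename : ∀ {Γ : Ctx} {A : Ty} (t : Tm Γ A) {Δ Θ : Ctx} (ρ : Ren Γ Δ)
    (σ : Sub Δ Θ), Tm.subst σ (Tm.rename ρ t) = Tm.subst (fun B x => σ B (ρ B x)) t := by
  intro Γ A t
  induction t with
  | var x => intros; rfl
  | lam t ih => intro Δ Θ ρ σ; simp only [Tm.rename, Tm.subst]; rw [ih, ← Sub.lift_ren]
  | app t u iht ihu => intro Δ Θ ρ σ; simp only [Tm.rename, Tm.subst]; rw [iht, ihu]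
  | pair t u iht ihu => intro Δ Θ ρ σ; simp only [Tm.rename, Tm.subst]; rw [iht, ihu]
  | fst t ih => intro Δ Θ ρ σ; simp only [Tm.rename, Tm.subst]; rw [ih]
  | snd t ih => intro Δ Θ ρ σ; simp only [Tm.rename, Tm.subst]; rw [ih]
  | inl t ih => intro Δ Θ ρ σ; simp only [Tm.rename, Tm.subst]; rw [ih]
  | inr t ih => intro Δ Θ ρ σ; simp only [Tm.rename, Tm.subst]; rw [ih]
  | case s t u ihs iht ihu =>
      intro Δ Θ ρ σ; simp only [Tm.rename, Tm.subst]
      rw [ihs, iht, ihu, ← Sub.lift_ren, ← Sub.lift_ren]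
  | star => intros; rfl

theorem Sub.ren_lift {Γ Δ Θ : Ctx} {A : Ty} (σ : Sub Γ Δ) (ρ : Ren Δ Θ) :
    (Sub.lift (A := A) fun B x => Tm.rename ρ (σ B x))
      = fun B x => Tm.rename (Ren.lift ρ) (Sub.lift σ B x) := by
  funext B x
  cases x with
  | vz => rfl
  | vs y =>
      show Tm.wk (Tm.rename ρ (σ _ y)) = Tm.rename (Ren.lift ρ) (Tm.wk (σ _ y))
      unfold Tm.wk
      exact (rename_rename (σ B y) ρ (fun _ v => Var.vs v)).trans
        (rename_rename (σ B y) (fun _ v => Var.vs v) (Ren.lift (A := A) ρ)).symm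

theorem rename_subst : ∀ {Γ : Ctx} {A : Ty} (t : Tm Γ A) {Δ Θ : Ctx} (σ : Sub Γ Δ)
    (ρ : Ren Δ Θ), Tm.rename ρ (Tm.subst σ t) = Tm.subst (fun B x => Tm.rename ρ (σ B x)) t := by
  intro Γ A t
  induction t with
  | var x => intros; rfl
  | lam t ih => intro Δ Θ σ ρ; simp only [Tm.rename, Tm.subst]; rw [ih, ← Sub.ren_lift]
  | app t u iht ihu => intro Δ Θ σ ρ; simp only [Tm.rename, Tm.subst]; rw [iht, ihu]
  | pair t u iht ihu => intro Δ Θ σ ρ; simp only [Tm.rename, Tm.subst]; rw [iht, ihu]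
  | fst t ih => intro Δ Θ σ ρ; simp only [Tm.rename, Tm.subst]; rw [ih]
  | snd t ih => intro Δ Θ σ ρ; simp only [Tm.rename, Tm.subst]; rw [ih]
  | inl t ih => intro Δ Θ σ ρ; simp only [Tm.rename, Tm.subst]; rw [ih]
  | inr t ih => intro Δ Θ σ ρ; simp only [Tm.rename, Tm.subst]; rw [ih]
  | case s t u ihs iht ihu =>
      intro Δ Θ σ ρ; simp only [Tm.rename, Tm.subst]
      rw [ihs, iht, ihu, ← Sub.ren_lift, ← Sub.ren_lift]
  | star => intros; rfl

theorem Sub.lift_lift {Γ Δ Θ : Ctx} {A : Ty} (σ : Sub Γ Δ) (τ : Sub Δ Θ) :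
    (Sub.lift (A := A) fun B x => Tm.subst τ (σ B x))
      = fun B x => Tm.subst (Sub.lift τ) (Sub.lift σ B x) := by
  funext B x
  cases x with
  | vz => rfl
  | vs y =>
      show Tm.wk (Tm.subst τ (σ _ y)) = Tm.subst (Sub.lift τ) (Tm.wk (σ _ y))
      unfold Tm.wk
      exact (rename_subst (σ B y) τ (fun _ v => Var.vs v)).trans
        (subst_rename (σ B y) (fun _ v => Var.vs v) (Sub.lift (A := A) τ)).symm

theorem subst_subst : ∀ {Γ : Ctx} {A : Ty} (t : Tm Γ A) {Δ Θ : Ctx} (σ : Sub Γ Δ)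
    (τ : Sub Δ Θ), Tm.subst τ (Tm.subst σ t) = Tm.subst (fun B x => Tm.subst τ (σ B x)) t := by
  intro Γ A t
  induction t with
  | var x => intros; rfl
  | lam t ih => intro Δ Θ σ τ; simp only [Tm.subst]; rw [ih, ← Sub.lift_lift]
  | app t u iht ihu => intro Δ Θ σ τ; simp only [Tm.subst]; rw [iht, ihu]
  | pair t u iht ihu => intro Δ Θ σ τ; simp only [Tm.subst]; rw [iht, ihu]
  | fst t ih => intro Δ Θ σ τ; simp only [Tm.subst]; rw [ih]
  | snd t ih => intro Δ Θ σ τ; simp only [Tm.subst]; rw [ih]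
  | inl t ih => intro Δ Θ σ τ; simp only [Tm.subst]; rw [ih]
  | inr t ih => intro Δ Θ σ τ; simp only [Tm.subst]; rw [ih]
  | case s t u ihs iht ihu =>
      intro Δ Θ σ τ; simp only [Tm.subst]
      rw [ihs, iht, ihu, ← Sub.lift_lift, ← Sub.lift_lift]
  | star => intros; rfl

theorem subst_id : ∀ {Γ : Ctx} {A : Ty} (t : Tm Γ A),
    Tm.subst (fun _ x => Tm.var x) t = t := by
  intro Γ A t
  have hlift : ∀ (Δ : Ctx) (A : Ty),
      (Sub.lift (Γ := Δ) (Δ := Δ) (A := A) fun B x => Tm.var x) = fun B x => Tm.var x := by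
    intro Δ A; funext B x; cases x <;> rfl
  induction t with
  | var x => rfl
  | lam t ih => simp only [Tm.subst]; rw [hlift, ih]
  | app t u iht ihu => simp only [Tm.subst]; rw [iht, ihu]
  | pair t u iht ihu => simp only [Tm.subst]; rw [iht, ihu]
  | fst t ih => simp only [Tm.subst]; rw [ih]
  | snd t ih => simp only [Tm.subst]; rw [ih]
  | inl t ih => simp only [Tm.subst]; rw [ih]
  | inr t ih => simp only [Tm.subst]; rw [ih]
  | case s t u ihs iht ihu => simp only [Tm.subst]; rw [ihs, hlift, iht, hlift, ihu]
  | star => rfl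

/-- Weakening by one (inserting a fresh hypothesis in second position) under a binder. -/
def wk1 {Γ : Ctx} {A B C : Ty} (t : Tm (A :: Γ) C) : Tm (A :: B :: Γ) C :=
  Tm.rename (Ren.lift fun _ v => Var.vs v) t

/-- The coercion `λ x. ι₁ x` of a type `e` into the base type `e + (e + e)`. -/
def Vt {Γ : Ctx} (e : Ty) : Tm Γ (Ty.arr e (Ty.sum e (Ty.sum e e))) :=
  Tm.lam (Tm.inl (Tm.var .vz))

/-- Weakening under a binder followed by single substitution is the identity. -/
theorem key_a {Γ : Ctx} {S A e : Ty} (M : Tm Γ S) (t : Tm (A :: Γ) e) :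
    Tm.subst (Sub.lift (Sub.single M)) (wk1 (B := S) t) = t := by
  unfold wk1
  rw [subst_rename]
  have : (fun (B : Ty) (x : Var (A :: Γ) B) =>
      Sub.lift (Sub.single M) B (Ren.lift (fun _ v => Var.vs v) B x))
      = fun B x => Tm.var x := by
    funext B x; cases x <;> rfl
  rw [this, subst_id]

theorem key_b {Γ : Ctx} {c d e : Ty} (t : Tm (c :: Γ) e) :
    Tm.subst1 (Tm.subst (Sub.lift (Sub.inlTop (A := c) (B := d)))
      (wk1 (B := Ty.sum c d) t)) (Tm.var .vz) = t := by
  unfold wk1 Tm.subst1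
  rw [subst_rename]
  refine (subst_subst t _ _).trans ?_
  have : (fun (B : Ty) (x : Var (c :: Γ) B) =>
      Tm.subst (Sub.single (Tm.var .vz))
        (Sub.lift (Sub.inlTop (A := c) (B := d)) B (Ren.lift (fun _ v => Var.vs v) B x)))
      = fun B x => Tm.var x := by
    funext B x; cases x <;> rfl
  rw [this, subst_id]

theorem key_b' {Γ : Ctx} {c d e : Ty} (t : Tm (d :: Γ) e) :
    Tm.subst1 (Tm.subst (Sub.lift (Sub.inrTop (A := c) (B := d)))
      (wk1 (B := Ty.sum c d) t)) (Tm.var .vz) = t := by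
  unfold wk1 Tm.subst1
  rw [subst_rename]
  refine (subst_subst t _ _).trans ?_
  have : (fun (B : Ty) (x : Var (d :: Γ) B) =>
      Tm.subst (Sub.single (Tm.var .vz))
        (Sub.lift (Sub.inrTop (A := c) (B := d)) B (Ren.lift (fun _ v => Var.vs v) B x)))
      = fun B x => Tm.var x := by
    funext B x; cases x <;> rfl
  rw [this, subst_id]

/-- For every ENF type `e`, the unrestricted sum eta equation
`N{M/x} = δ(M, x₁.N{ι₁x₁/x}, x₂.N{ι₂x₂/x})` — where `x` is a variable of sum
type `c+d` with `c` a CNF and `d` a DNF — is derivable in the restricted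
theory =βη^e. -/
theorem eta_sum_derivable {Γ : Ctx} {c d e : Ty}
    (hc : IsCNF c) (hd : IsDNF d) (he : IsENF e)
    (N : Tm (Ty.sum c d :: Γ) e) (M : Tm Γ (Ty.sum c d)) :
    EqE (Tm.subst1 N M)
        (Tm.case M (Tm.subst Sub.inlTop N) (Tm.subst Sub.inrTop N)) := by
  rcases he with hc' | hd'
  · -- e is a CNF: embed e into the base type D := e + (e + e) via Vt e = λx. ι₁x.
    have hD : IsDNF (Ty.sum e (Ty.sum e e)) := .dis hc' (.two hc' hc')
    have hbD : IsBase (Ty.sum e (Ty.sum e e)) := .bd hD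
    have hS : IsDNF (Ty.sum c d) := .dis hc hd
    -- β→: (λx. ι₁x) u = ι₁ u
    have step1 : ∀ {Γ' : Ctx} (u : Tm Γ' e), EqE (Tm.app (Vt e) u) (Tm.inl u) :=
      fun u => EqE.beta_arr hc' hbD _ u
    -- β+: δ(ι₁ u, x₁.x₁, x₂.…) = u
    have strip : ∀ (u : Tm Γ e),
        EqE (Tm.case (Tm.inl u) (Tm.var .vz)
          (Tm.case (Tm.var .vz) (Tm.var .vz) (Tm.var .vz))) u :=
      fun u => EqE.beta_inl hc' (.two hc' hc') (Or.inl hc') u _ _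
    -- η+ at the base type D applied to (Vt e) N
    have h1 : EqE (Tm.inl (B := Ty.sum e e) (Tm.subst1 N M))
        (Tm.case M (Tm.inl (B := Ty.sum e e) (Tm.subst Sub.inlTop N))
                   (Tm.inl (B := Ty.sum e e) (Tm.subst Sub.inrTop N))) := by
      have A1 : EqE (Tm.app (Vt e) (Tm.subst1 N M))
          (Tm.case M (Tm.app (Vt e) (Tm.subst Sub.inlTop N))
                     (Tm.app (Vt e) (Tm.subst Sub.inrTop N))) :=
        EqE.eta_sum hS hbD (Tm.app (Vt e) N) M
      exact (step1 _).symm.trans (A1.trans (EqE.case_congr (.refl M) (step1 _) (step1 _)))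
    -- the left branch of the second η+ instance reduces to ι₁ N₁
    have hb1 : EqE
        (Tm.app (Vt e) (Tm.case (Tm.inl (Tm.var .vz))
          (Tm.subst (Sub.lift (Sub.inlTop (A := c) (B := d))) (wk1 (B := Ty.sum c d) (Tm.subst Sub.inlTop N)))
          (Tm.subst (Sub.lift (Sub.inlTop (A := c) (B := d))) (wk1 (B := Ty.sum c d) (Tm.subst Sub.inrTop N)))))
        (Tm.inl (B := Ty.sum e e) (Tm.subst Sub.inlTop N)) := by
      have h0 := EqE.app_congr (EqE.refl (Vt e))
        (EqE.beta_inl hc hd (Or.inl hc') (Tm.var .vz)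
          (Tm.subst (Sub.lift (Sub.inlTop (A := c) (B := d))) (wk1 (B := Ty.sum c d) (Tm.subst Sub.inlTop N)))
          (Tm.subst (Sub.lift (Sub.inlTop (A := c) (B := d))) (wk1 (B := Ty.sum c d) (Tm.subst Sub.inrTop N))))
      rw [key_b (Tm.subst Sub.inlTop N)] at h0
      exact h0.trans (step1 _)
    -- and the right branch reduces to ι₁ N₂
    have hb2 : EqE
        (Tm.app (Vt e) (Tm.case (Tm.inr (Tm.var .vz))
          (Tm.subst (Sub.lift (Sub.inrTop (A := c) (B := d))) (wk1 (B := Ty.sum c d) (Tm.subst Sub.inlTop N)))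
          (Tm.subst (Sub.lift (Sub.inrTop (A := c) (B := d))) (wk1 (B := Ty.sum c d) (Tm.subst Sub.inrTop N)))))
        (Tm.inl (B := Ty.sum e e) (Tm.subst Sub.inrTop N)) := by
      have h0 := EqE.app_congr (EqE.refl (Vt e))
        (EqE.beta_inr hc hd (Or.inl hc') (Tm.var .vz)
          (Tm.subst (Sub.lift (Sub.inrTop (A := c) (B := d))) (wk1 (B := Ty.sum c d) (Tm.subst Sub.inlTop N)))
          (Tm.subst (Sub.lift (Sub.inrTop (A := c) (B := d))) (wk1 (B := Ty.sum c d) (Tm.subst Sub.inrTop N))))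
      rw [key_b' (Tm.subst Sub.inrTop N)] at h0
      exact h0.trans (step1 _)
    -- η+ at the base type D applied to (Vt e) (δ(x, x₁.N₁', x₂.N₂'))
    have h2 : EqE (Tm.inl (B := Ty.sum e e)
          (Tm.case M (Tm.subst Sub.inlTop N) (Tm.subst Sub.inrTop N)))
        (Tm.case M (Tm.inl (B := Ty.sum e e) (Tm.subst Sub.inlTop N))
                   (Tm.inl (B := Ty.sum e e) (Tm.subst Sub.inrTop N))) := by
      have A2 : EqE
          (Tm.app (Vt e) (Tm.case M
            (Tm.subst (Sub.lift (Sub.single M)) (wk1 (B := Ty.sum c d) (Tm.subst Sub.inlTop N)))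
            (Tm.subst (Sub.lift (Sub.single M)) (wk1 (B := Ty.sum c d) (Tm.subst Sub.inrTop N)))))
          (Tm.case M
            (Tm.app (Vt e) (Tm.case (Tm.inl (Tm.var .vz))
              (Tm.subst (Sub.lift (Sub.inlTop (A := c) (B := d))) (wk1 (B := Ty.sum c d) (Tm.subst Sub.inlTop N)))
              (Tm.subst (Sub.lift (Sub.inlTop (A := c) (B := d))) (wk1 (B := Ty.sum c d) (Tm.subst Sub.inrTop N)))))
            (Tm.app (Vt e) (Tm.case (Tm.inr (Tm.var .vz))
              (Tm.subst (Sub.lift (Sub.inrTop (A := c) (B := d))) (wk1 (B := Ty.sum c d) (Tm.subst Sub.inlTop N)))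
              (Tm.subst (Sub.lift (Sub.inrTop (A := c) (B := d))) (wk1 (B := Ty.sum c d) (Tm.subst Sub.inrTop N)))))) :=
        EqE.eta_sum hS hbD
          (Tm.app (Vt e) (Tm.case (Tm.var .vz)
            (wk1 (B := Ty.sum c d) (Tm.subst Sub.inlTop N)) (wk1 (B := Ty.sum c d) (Tm.subst Sub.inrTop N)))) M
      rw [key_a M (Tm.subst Sub.inlTop N), key_a M (Tm.subst Sub.inrTop N)] at A2
      exact (step1 _).symm.trans (A2.trans (EqE.case_congr (.refl M) hb1 hb2))
    -- strip ι₁ on both sides using β+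
    have h4 := h1.trans h2.symm
    have h5 := EqE.case_congr h4 (EqE.refl (Tm.var (Γ := e :: Γ) (A := e) .vz))
      (EqE.refl (Tm.case (Tm.var (Γ := Ty.sum e e :: Γ) .vz) (Tm.var .vz) (Tm.var .vz)))
    exact ((strip _).symm.trans h5).trans (strip _)
  · -- e is a DNF: this is exactly the axiom η+.
    exact EqE.eta_sum (.dis hc hd) (.bd hd') N M


end ExpLog
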